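/- Let λ be a Perron number whose degree [ℚ(λ):ℚ] is even. Then for every nonnegative integer k, ℚ(λ + λ⁻¹) = ℚ(λ^{2k+1} + λ^{−(2k+1)}), and for every positive integer k, ℚ(λ² + λ⁻²) = ℚ(λ^{2k} + λ^{−2k}). -/

import Mathlib

open Polynomial

/-- The Galois conjugates of a real algebraic number: the complex roots of its
minimal polynomial over `ℚ`. -/
def galoisConjugates (x : ℝ) : Set ℂ :=
  {z : ℂ | Polynomial.aeval z (minpoly ℚ x) = 0}

/-- A Perron number: a real algebraic integer `l > 1` all of whose Galois conjugates
other than `l` itself have modulus strictly less than `l`. -/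
def IsPerron (l : ℝ) : Prop :=
  1 < l ∧ IsIntegral ℤ l ∧
    ∀ z : ℂ, z ∈ galoisConjugates l → z ≠ (l : ℂ) → ‖z‖ < l

open IntermediateField
lemma perron_key_abstract {K : Type*} [Field K] [CharZero K] (f : K →+* ℂ)
    (l : ℝ) (hl0 : 0 < l)
    (x : K) (hxc : f x = (l : ℂ))
    (R : K → Prop) (hRx : R x)
    (perron : ∀ y, R y → ‖f y‖ = l → y = x)
    (g c : K ≃+* K)
    (hgR : ∀ y, R y → R (g y)) (hgR' : ∀ y, R y → R (g.symm y))
    (hcR : ∀ y, R y → R (c y))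
    (hc : ∀ y, f (c y) = (starRingEnd ℂ) (f y))
    (n : ℕ) (hn : 0 < n)
    (hg : g (x ^ n + (x ^ n)⁻¹) = x ^ n + (x ^ n)⁻¹) :
    g x = x ∨ g x = x⁻¹ ∨ (Even n ∧ g x = -x⁻¹) := by
  have hf : Function.Injective f := f.injective
  have hx0 : x ≠ 0 := by
    intro h
    rw [h, map_zero] at hxc
    have := Complex.ofReal_eq_zero.mp hxc.symm
    linarith
  have pow_inj : ∀ a b : ℝ, 0 ≤ a → 0 < b → a ^ n = b ^ n → a = b := by
    intro a b ha hb h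
    rcases lt_trichotomy a b with hlt | he | hgt
    · have := pow_lt_pow_left₀ hlt ha hn.ne'
      rw [h] at this; exact absurd this (lt_irrefl _)
    · exact he
    · have := pow_lt_pow_left₀ hgt hb.le hn.ne'
      rw [h] at this; exact absurd this (lt_irrefl _)
  have habs_x : ‖f x‖ = l := by rw [hxc]; simp [abs_of_nonneg hl0.le]
  have hxn0 : x ^ n ≠ 0 := pow_ne_zero _ hx0
  set u := g x with hu
  have hu_root : R u := hgR x hRx
  have hu0 : u ≠ 0 := fun h => hx0 (g.injective (by rw [← hu, h, map_zero]))
  have heq : u ^ n + (u ^ n)⁻¹ = x ^ n + (x ^ n)⁻¹ := by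
    rw [← hg, map_add, map_pow, map_inv₀, map_pow]
  have hun0 : u ^ n ≠ 0 := pow_ne_zero _ hu0
  have hcases : u ^ n = x ^ n ∨ u ^ n = (x ^ n)⁻¹ := by
    have h1 : (u ^ n - x ^ n) * (u ^ n - (x ^ n)⁻¹) = 0 := by
      have h2 : (u ^ n - x ^ n) * (u ^ n - (x ^ n)⁻¹) =
          u ^ n * ((u ^ n + (u ^ n)⁻¹) - (x ^ n + (x ^ n)⁻¹)) := by
        field_simp
        ring
      rw [h2, heq, sub_self, mul_zero]
    rcases mul_eq_zero.mp h1 with h | h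
    · exact Or.inl (sub_eq_zero.mp h)
    · exact Or.inr (sub_eq_zero.mp h)
  rcases hcases with hA | hB
  · left
    refine (perron u hu_root ?_).symm ▸ rfl
    apply pow_inj _ _ (norm_nonneg _) hl0
    rw [← norm_pow, ← map_pow, hA, map_pow, hxc, norm_pow]
    simp [abs_of_nonneg hl0.le]
  · set z : K := x * u with hz
    have hz0 : z ≠ 0 := mul_ne_zero hx0 hu0
    have hzn : z ^ n = 1 := by rw [hz, mul_pow, hB, mul_inv_cancel₀ hxn0]
    have habs1 : ∀ y : K, y ^ n = 1 → ‖f y‖ = 1 := by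
      intro y hy
      have h1 : ‖f y‖ ^ n = 1 := by
        rw [← norm_pow, ← map_pow, hy, map_one, norm_one]
      exact pow_inj _ _ (norm_nonneg _) one_pos (by rw [h1, one_pow])
    have habs_z : ‖f z‖ = 1 := habs1 z hzn
    have hu_eq : u = x⁻¹ * z := by rw [hz, ← mul_assoc, inv_mul_cancel₀ hx0, one_mul]
    have habs_u : ‖f u‖ = l⁻¹ := by
      apply pow_inj _ _ (norm_nonneg _) (inv_pos.mpr hl0)
      rw [← norm_pow, ← map_pow, hB, map_inv₀, map_pow, norm_inv, hxc, norm_pow]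
      simp [abs_of_nonneg hl0.le, inv_pow]
    have hgu : g u = u⁻¹ * g z := by
      have h3 : g u = g (x⁻¹ * z) := by rw [← hu_eq]
      rw [h3, map_mul, map_inv₀, ← hu]
    have hgz_n : (g z) ^ n = 1 := by rw [← map_pow, hzn, map_one]
    have habs_gz : ‖f (g z)‖ = 1 := habs1 _ hgz_n
    have hgu_root : R (g u) := hgR u hu_root
    have hgu_eq_x : g u = x := by
      refine perron _ hgu_root ?_
      rw [hgu, map_mul, map_inv₀, norm_mul, norm_inv, habs_gz, habs_u, mul_one, inv_inv]
    have hgz : g z = z := by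
      have h3 : x = u⁻¹ * g z := by rw [← hgu_eq_x, hgu]
      have h4 : u * x = g z := by rw [h3, ← mul_assoc, mul_inv_cancel₀ hu0, one_mul]
      rw [← h4, hz, mul_comm]
    have hcx : c x = x := by
      apply hf
      rw [hc, hxc, Complex.conj_ofReal]
    have hcz : c z = z⁻¹ := by
      apply hf
      rw [hc, map_inv₀]
      have hz1 : f z * (starRingEnd ℂ) (f z) = 1 := by
        rw [Complex.mul_conj]
        norm_cast
        rw [Complex.normSq_eq_norm_sq, habs_z, one_pow]
      have hfz0 : f z ≠ 0 := fun h => hz0 (hf (by rw [h, map_zero]))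
      field_simp
      linear_combination hz1
    have hgsx : g.symm x = x⁻¹ * z := by
      apply g.injective
      rw [RingEquiv.apply_symm_apply, ← hu_eq, hgu_eq_x]
    have hgsz : g.symm z = z := by
      apply g.injective
      rw [RingEquiv.apply_symm_apply, hgz]
    have hcu : c u = x⁻¹ * z⁻¹ := by
      rw [hu_eq]
      rw [map_mul]
      rw [map_inv₀]
      rw [hcx]
      rw [hcz]
    have hw : g.symm (c u) = x * (z⁻¹) ^ 2 := by
      rw [hcu, map_mul, map_inv₀, map_inv₀, hgsx, hgsz, mul_inv, inv_inv]
      ring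
    have hw_root : R (g.symm (c u)) := hgR' _ (hcR u hu_root)
    have hw_eq : g.symm (c u) = x := by
      refine perron _ hw_root ?_
      rw [hw, map_mul, map_pow, map_inv₀, hxc]
      rw [norm_mul, norm_pow, norm_inv, habs_z]
      simp [abs_of_nonneg hl0.le]
    have hz2 : z ^ 2 = 1 := by
      have h4 : x * (z⁻¹) ^ 2 = x := by rw [← hw, hw_eq]
      have h4' : x * (z ^ 2)⁻¹ = x * 1 := by rw [mul_one, ← inv_pow]; exact h4
      have h5 := mul_left_cancel₀ hx0 h4'
      rwa [inv_eq_one] at h5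
    have hzpm : z = 1 ∨ z = -1 := by
      have h6 : (z - 1) * (z + 1) = 0 := by linear_combination hz2
      rcases mul_eq_zero.mp h6 with h | h
      · exact Or.inl (by linear_combination h)
      · exact Or.inr (by linear_combination h)
    rcases hzpm with h | h
    · right; left
      rw [hu_eq, h, mul_one]
    · right; right
      constructor
      · by_contra hodd
        have hodd' : Odd n := Nat.not_even_iff_odd.mp hodd
        rw [h, hodd'.neg_one_pow] at hzn
        have h7 : (2 : K) = 0 := by linear_combination -hzn
        exact two_ne_zero h7
      · rw [hu_eq, h]
        ring


lemma perron_mem_adjoin (l : ℝ) (hl : IsPerron l) {m n : ℕ} (hn : 0 < n)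
    (hpar : Odd n ∨ Even m) :
    l ^ m + (l ^ m)⁻¹ ∈ IntermediateField.adjoin ℚ {l ^ n + (l ^ n)⁻¹} := by
  obtain ⟨hl1, hint, hconj⟩ := hl
  have hl0 : (0:ℝ) < l := lt_trans one_pos hl1
  have hli : IsIntegral ℚ l := hint.tower_top
  set p := minpoly ℚ l with hp
  have hp0 : p ≠ 0 := minpoly.ne_zero hli
  have hsep : p.Separable := (minpoly.irreducible hli).separable
  have hsplits : (p.map (algebraMap ℚ ℂ)).Splits := IsAlgClosed.splits _
  set N := IntermediateField.adjoin ℚ (p.rootSet ℂ) with hN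
  haveI : IsSplittingField ℚ N p := adjoin_rootSet_isSplittingField hsplits
  haveI : FiniteDimensional ℚ N := IsSplittingField.finiteDimensional N p
  haveI : IsGalois ℚ N := IsGalois.of_separable_splitting_field hsep
  have hinj : Function.Injective (algebraMap N ℂ) := (algebraMap N ℂ).injective
  have hroot : (Polynomial.aeval (l:ℂ)) p = 0 := by
    rw [show ((l:ℂ)) = algebraMap ℝ ℂ l from rfl, aeval_algebraMap_apply, minpoly.aeval, map_zero]
  have hlN : (l:ℂ) ∈ N := subset_adjoin _ _ (by rw [mem_rootSet]; exact ⟨hp0, hroot⟩)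
  set x : N := ⟨(l:ℂ), hlN⟩ with hx
  have hxc : (algebraMap N ℂ) x = (l:ℂ) := rfl
  have hxr : (Polynomial.aeval x) p = 0 := by
    apply hinj
    rw [← aeval_algebraMap_apply, hxc, hroot, map_zero]
  -- root preservation
  have hroots : ∀ (g : N →ₐ[ℚ] N) (y : N), aeval y p = 0 → aeval (g y) p = 0 := by
    intro g y hy
    have h := aeval_algHom_apply g y p
    rw [hy, map_zero] at h
    exact h
  -- Perron rigidity
  have perron : ∀ y : N, aeval y p = 0 → ‖(algebraMap N ℂ) y‖ = l → y = x := by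
    intro y hy habs
    by_cases h : (algebraMap N ℂ) y = (l:ℂ)
    · exact hinj (by rw [h, hxc])
    · exfalso
      have hlt : ‖(algebraMap N ℂ) y‖ < l := by
        refine hconj _ ?_ h
        show aeval ((algebraMap N ℂ) y) (minpoly ℚ l) = 0
        rw [← hp, aeval_algebraMap_apply, hy, map_zero]
      rw [habs] at hlt; exact lt_irrefl _ hlt
  -- complex conjugation restricted to N
  set conjQ : ℂ ≃ₐ[ℚ] ℂ := Complex.conjAe.restrictScalars ℚ with hconjQ
  set c : N ≃ₐ[ℚ] N := conjQ.restrictNormal N with hcdef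
  have hc : ∀ y : N, (algebraMap N ℂ) (c y) = (starRingEnd ℂ) ((algebraMap N ℂ) y) := by
    intro y
    have h := AlgEquiv.restrictNormal_commutes conjQ N y
    rw [h]; rfl
  haveI : CharZero N := charZero_of_injective_algebraMap (algebraMap ℚ N).injective
  -- main fixing step
  have hfix : ∀ g : N ≃ₐ[ℚ] N, g (x ^ n + (x ^ n)⁻¹) = x ^ n + (x ^ n)⁻¹ →
      g (x ^ m + (x ^ m)⁻¹) = x ^ m + (x ^ m)⁻¹ := by
    intro g hg
    have hkey := perron_key_abstract (algebraMap N ℂ) l hl0 x hxc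
      (fun y => aeval y p = 0) hxr perron g.toRingEquiv c.toRingEquiv
      (fun y hy => hroots g.toAlgHom y hy) (fun y hy => hroots g.symm.toAlgHom y hy)
      (fun y hy => hroots c.toAlgHom y hy) hc n hn hg
    have hgm : g (x ^ m + (x ^ m)⁻¹) = (g x) ^ m + ((g x) ^ m)⁻¹ := by
      rw [map_add, map_pow, map_inv₀, map_pow]
    have hkey' : g x = x ∨ g x = x⁻¹ ∨ (Even n ∧ g x = -x⁻¹) := hkey
    rcases hkey' with h | h | ⟨hev, h⟩
    · rw [hgm, h]
    · rw [hgm, h, inv_pow, inv_inv, add_comm]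
    · have hm : Even m := by
        rcases hpar with hodd | hm
        · exact absurd hodd (Nat.not_odd_iff_even.mpr hev)
        · exact hm
      rw [hgm, h, hm.neg_pow, inv_pow, inv_inv, add_comm]
  -- Galois correspondence: membership in N
  have hmem : x ^ m + (x ^ m)⁻¹ ∈ IntermediateField.adjoin ℚ {x ^ n + (x ^ n)⁻¹} := by
    set K' : IntermediateField ℚ N := IntermediateField.adjoin ℚ {x ^ n + (x ^ n)⁻¹} with hK'
    rw [← IsGalois.fixedField_fixingSubgroup K']
    intro g
    refine hfix g.1 ?_
    exact g.2 ⟨x ^ n + (x ^ n)⁻¹, subset_adjoin _ _ rfl⟩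
  -- transfer to ℂ
  have hCn : (N.val (x ^ n + (x ^ n)⁻¹) : ℂ) = (l:ℂ) ^ n + ((l:ℂ) ^ n)⁻¹ := by
    rw [map_add, map_pow, map_inv₀, map_pow]
    have : N.val x = (l:ℂ) := rfl
    rw [this]
  have hCm : (N.val (x ^ m + (x ^ m)⁻¹) : ℂ) = (l:ℂ) ^ m + ((l:ℂ) ^ m)⁻¹ := by
    rw [map_add, map_pow, map_inv₀, map_pow]
    have : N.val x = (l:ℂ) := rfl
    rw [this]
  have hC : (l:ℂ) ^ m + ((l:ℂ) ^ m)⁻¹ ∈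
      IntermediateField.adjoin ℚ {(l:ℂ) ^ n + ((l:ℂ) ^ n)⁻¹} := by
    have h1 : N.val (x ^ m + (x ^ m)⁻¹) ∈
        IntermediateField.adjoin ℚ {N.val (x ^ n + (x ^ n)⁻¹)} := by
      rw [← Set.image_singleton, ← IntermediateField.adjoin_map]
      exact ⟨_, hmem, rfl⟩
    rw [hCn] at h1
    rw [← hCm]
    exact h1
  -- transfer to ℝ
  set ψ : ℝ →ₐ[ℚ] ℂ := IsScalarTower.toAlgHom ℚ ℝ ℂ with hψ
  have hψ_apply : ∀ r : ℝ, ψ r = (r : ℂ) := fun r => rfl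
  have h3 : (IntermediateField.adjoin ℚ ({l ^ n + (l ^ n)⁻¹} : Set ℝ)).map ψ =
      IntermediateField.adjoin ℚ {(l:ℂ) ^ n + ((l:ℂ) ^ n)⁻¹} := by
    rw [IntermediateField.adjoin_map, Set.image_singleton]
    congr 1
    rw [hψ_apply]
    push_cast
    rfl
  rw [← h3] at hC
  obtain ⟨b, hb, hfb⟩ := hC
  have hb_eq : b = l ^ m + (l ^ m)⁻¹ := by
    have hfb' : (b : ℂ) = (l:ℂ) ^ m + ((l:ℂ) ^ m)⁻¹ := hfb
    apply Complex.ofReal_injective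
    rw [hfb']
    push_cast
    ring
  rwa [hb_eq] at hb


theorem perron_traces_even_degree (l : ℝ) (hl : IsPerron l)
    (heven : Even (minpoly ℚ l).natDegree) :
    (∀ k : ℕ,
      IntermediateField.adjoin ℚ {l + l⁻¹} =
        IntermediateField.adjoin ℚ {l ^ (2 * k + 1) + (l ^ (2 * k + 1))⁻¹}) ∧
    (∀ k : ℕ, 0 < k →
      IntermediateField.adjoin ℚ {l ^ 2 + (l ^ 2)⁻¹} =
        IntermediateField.adjoin ℚ {l ^ (2 * k) + (l ^ (2 * k))⁻¹}) := by
  have hpow1 : l + l⁻¹ = l ^ 1 + (l ^ 1)⁻¹ := by rw [pow_one]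
  constructor
  · intro k
    apply le_antisymm
    · rw [IntermediateField.adjoin_le_iff, Set.singleton_subset_iff, hpow1]
      exact perron_mem_adjoin l hl (Nat.succ_pos _) (Or.inl (odd_two_mul_add_one k))
    · rw [IntermediateField.adjoin_le_iff, Set.singleton_subset_iff]
      have := perron_mem_adjoin l hl (m := 2 * k + 1) (n := 1) one_pos (Or.inl odd_one)
      rwa [← hpow1] at this
  · intro k hk
    apply le_antisymm
    · rw [IntermediateField.adjoin_le_iff, Set.singleton_subset_iff]
      exact perron_mem_adjoin l hl (m := 2) (n := 2 * k) (by omega) (Or.inr even_two)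
    · rw [IntermediateField.adjoin_le_iff, Set.singleton_subset_iff]
      exact perron_mem_adjoin l hl (m := 2 * k) (n := 2) two_pos (Or.inr (even_two_mul k))
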